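/- Fix a real p ∈ (0,1) and an integer K ≥ 2. Define μ_m = 1/(K−1+p) for m ∈ {1,…,K−2} and μ_{K−1} = (1+p)/(K−1+p). Then Σ_{m=1}^{K−1} μ_m = 1, and for every subset S ⊆ {1,…,K} with |S| ≥ 2: Σ_{m=1}^{K−1} μ_m·d_S(σ̂_m) ≤ log(1/p)·(1−p)/(K−1+p). -/

import Mathlib

/-- Ordinal Attraction choice probability of item `i` from display set `S`
under the ranking `σ`. -/
noncomputable def oa {K : ℕ} (p : ℝ) (σ : Equiv.Perm (Fin K))
    (S : Finset (Fin K)) (i : Fin K) : ℝ :=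
  (1 - p) * p ^ ((S.filter fun j => σ j ≤ σ i).card - 1) / (1 - p ^ S.card)

/-- `d_S(σ)`: KL divergence on `S` between the OA model with the identity
ranking and the OA model with ranking `σ`. -/
noncomputable def dS {K : ℕ} (p : ℝ) (S : Finset (Fin K)) (σ : Equiv.Perm (Fin K)) : ℝ :=
  ∑ i ∈ S, oa p 1 S i * Real.log (oa p 1 S i / oa p σ S i)

/-- The adjacent transposition `σ̂_m` swapping (0-indexed) items `m` and `m+1`. -/
def adjSwap (K : ℕ) (m : ℕ) : Equiv.Perm (Fin K) :=
  if h : m + 1 < K then Equiv.swap ⟨m, Nat.lt_of_succ_lt h⟩ ⟨m + 1, h⟩ else 1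

namespace StmtAux

/-- rank of `i` within `S` under `σ` -/
def rk {K : ℕ} (S : Finset (Fin K)) (σ : Equiv.Perm (Fin K)) (i : Fin K) : ℕ :=
  (S.filter fun j => σ j ≤ σ i).card

lemma oa_eq_rk {K : ℕ} (p : ℝ) (σ : Equiv.Perm (Fin K)) (S : Finset (Fin K)) (i : Fin K) :
    oa p σ S i = (1 - p) * p ^ (rk S σ i - 1) / (1 - p ^ S.card) := rfl

lemma rk_one {K : ℕ} (S : Finset (Fin K)) (i : Fin K) :
    rk S 1 i = (S.filter fun j => j ≤ i).card := by
  unfold rk; simp [Equiv.Perm.one_apply]; rfl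

lemma rk_pos {K : ℕ} {S : Finset (Fin K)} {σ : Equiv.Perm (Fin K)} {i : Fin K} (hi : i ∈ S) :
    1 ≤ rk S σ i :=
  Finset.card_pos.mpr ⟨i, Finset.mem_filter.mpr ⟨hi, le_refl _⟩⟩

lemma oa_pos {K : ℕ} {p : ℝ} (hp0 : 0 < p) (hp1 : p < 1) {S : Finset (Fin K)}
    (hS : S.Nonempty) (σ : Equiv.Perm (Fin K)) (i : Fin K) : 0 < oa p σ S i := by
  rw [oa_eq_rk]
  have h1 : p ^ S.card < 1 := pow_lt_one₀ hp0.le hp1 (Finset.card_ne_zero.mpr hS)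
  have h2 : (0:ℝ) < p ^ (rk S σ i - 1) := pow_pos hp0 _
  have h3 : (0:ℝ) < 1 - p ^ S.card := by linarith
  have h4 : (0:ℝ) < 1 - p := by linarith
  exact div_pos (mul_pos h4 h2) h3

lemma swap_le_iff_not_mem {K m : ℕ} (hm : m + 1 < K) {S : Finset (Fin K)}
    (hab : (⟨m, Nat.lt_of_succ_lt hm⟩ : Fin K) ∉ S ∨ (⟨m + 1, hm⟩ : Fin K) ∉ S)
    {i j : Fin K} (hi : i ∈ S) (hj : j ∈ S) :
    Equiv.swap (⟨m, Nat.lt_of_succ_lt hm⟩ : Fin K) ⟨m + 1, hm⟩ j ≤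
      Equiv.swap (⟨m, Nat.lt_of_succ_lt hm⟩ : Fin K) ⟨m + 1, hm⟩ i ↔ j ≤ i := by
  rcases hab with ha | hb
  · have hja : j ≠ (⟨m, Nat.lt_of_succ_lt hm⟩ : Fin K) := fun h => ha (h ▸ hj)
    have hia : i ≠ (⟨m, Nat.lt_of_succ_lt hm⟩ : Fin K) := fun h => ha (h ▸ hi)
    clear hi hj
    simp only [Equiv.swap_apply_def]
    split_ifs <;> simp only [Fin.le_def, Fin.ext_iff, ne_eq] at * <;> omega
  · have hjb : j ≠ (⟨m + 1, hm⟩ : Fin K) := fun h => hb (h ▸ hj)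
    have hib : i ≠ (⟨m + 1, hm⟩ : Fin K) := fun h => hb (h ▸ hi)
    clear hi hj
    simp only [Equiv.swap_apply_def]
    split_ifs <;> simp only [Fin.le_def, Fin.ext_iff, ne_eq] at * <;> omega

lemma swap_le_iff_other {K m : ℕ} (hm : m + 1 < K) {i : Fin K}
    (hia : i.1 ≠ m) (hib : i.1 ≠ m + 1) (j : Fin K) :
    Equiv.swap (⟨m, Nat.lt_of_succ_lt hm⟩ : Fin K) ⟨m + 1, hm⟩ j ≤
      Equiv.swap (⟨m, Nat.lt_of_succ_lt hm⟩ : Fin K) ⟨m + 1, hm⟩ i ↔ j ≤ i := by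
  simp only [Equiv.swap_apply_def]
  split_ifs <;> simp only [Fin.le_def, Fin.ext_iff, ne_eq] at * <;> omega

lemma rk_id_succ {K m : ℕ} (hm : m + 1 < K) {S : Finset (Fin K)}
    (hb : (⟨m + 1, hm⟩ : Fin K) ∈ S) :
    rk S 1 ⟨m + 1, hm⟩ = rk S 1 ⟨m, Nat.lt_of_succ_lt hm⟩ + 1 := by
  rw [rk_one, rk_one]
  have hset : (S.filter fun j => j ≤ (⟨m + 1, hm⟩ : Fin K)) =
      insert (⟨m + 1, hm⟩ : Fin K) (S.filter fun j => j ≤ (⟨m, Nat.lt_of_succ_lt hm⟩ : Fin K)) := by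
    ext x
    simp only [Finset.mem_filter, Finset.mem_insert, Fin.le_def, Fin.ext_iff]
    constructor
    · rintro ⟨hxS, hx⟩
      rcases Nat.lt_or_ge x.1 (m + 1) with h | h
      · exact Or.inr ⟨hxS, by omega⟩
      · exact Or.inl (by omega)
    · rintro (h | ⟨hxS, hx⟩)
      · exact ⟨by rwa [show x = (⟨m + 1, hm⟩ : Fin K) from Fin.ext h], by omega⟩
      · exact ⟨hxS, by omega⟩
  rw [hset, Finset.card_insert_of_notMem]
  simp only [Finset.mem_filter, Fin.le_def]
  omega

lemma rk_swap_at_a {K m : ℕ} (hm : m + 1 < K) (S : Finset (Fin K)) :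
    rk S (Equiv.swap (⟨m, Nat.lt_of_succ_lt hm⟩ : Fin K) ⟨m + 1, hm⟩) ⟨m, Nat.lt_of_succ_lt hm⟩
      = rk S 1 ⟨m + 1, hm⟩ := by
  rw [rk_one]; unfold rk
  congr 1
  apply Finset.filter_congr
  intro j _
  simp only [Equiv.swap_apply_def]
  split_ifs <;> simp only [Fin.le_def, Fin.ext_iff, ne_eq] at * <;> omega

lemma rk_swap_at_b {K m : ℕ} (hm : m + 1 < K) {S : Finset (Fin K)}
    (ha : (⟨m, Nat.lt_of_succ_lt hm⟩ : Fin K) ∈ S) (hb : (⟨m + 1, hm⟩ : Fin K) ∈ S) :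
    rk S (Equiv.swap (⟨m, Nat.lt_of_succ_lt hm⟩ : Fin K) ⟨m + 1, hm⟩) ⟨m + 1, hm⟩
      = rk S 1 ⟨m, Nat.lt_of_succ_lt hm⟩ := by
  rw [rk_one]; unfold rk
  set a : Fin K := ⟨m, Nat.lt_of_succ_lt hm⟩ with hadef
  set b : Fin K := ⟨m + 1, hm⟩ with hbdef
  have hset : (S.filter fun j => Equiv.swap a b j ≤ Equiv.swap a b b) =
      insert b ((S.filter fun j => j ≤ a).erase a) := by
    ext x
    simp only [Finset.mem_filter, Finset.mem_insert, Finset.mem_erase, Equiv.swap_apply_right,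
      Equiv.swap_apply_def]
    constructor
    · rintro ⟨hxS, hx⟩
      split_ifs at hx with h1 h2
      · exfalso; rw [hadef, hbdef] at hx; simp only [Fin.le_def] at hx; omega
      · exact Or.inl h2
      · refine Or.inr ⟨h1, hxS, hx⟩
    · rintro (h | ⟨hxa, hxS, hx⟩)
      · subst h
        refine ⟨hb, ?_⟩
        have hba : b ≠ a := by rw [hadef, hbdef]; simp [Fin.ext_iff]
        rw [if_neg hba, if_pos rfl]
      · refine ⟨hxS, ?_⟩
        have hxb : x ≠ b := by
          intro h; subst h
          rw [hadef, hbdef] at hx; simp only [Fin.le_def] at hx; omega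
        rw [if_neg hxa, if_neg hxb]
        exact hx
  rw [hset, Finset.card_insert_of_notMem, Finset.card_erase_of_mem]
  · have h1 : 1 ≤ (S.filter fun j => j ≤ a).card :=
      Finset.card_pos.mpr ⟨a, Finset.mem_filter.mpr ⟨ha, le_refl _⟩⟩
    omega
  · exact Finset.mem_filter.mpr ⟨ha, le_refl _⟩
  · simp only [Finset.mem_erase, Finset.mem_filter, hadef, hbdef, Fin.le_def, Fin.ext_iff]
    omega

lemma rk_id_lt {K : ℕ} {S : Finset (Fin K)} {x y : Fin K} (hy : y ∈ S) (hxy : x < y) :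
    rk S 1 x < rk S 1 y := by
  rw [rk_one, rk_one]
  apply Finset.card_lt_card
  have hsub : Finset.filter (fun j => j ≤ x) S ⊆ Finset.filter (fun j => j ≤ y) S := by
    intro j hj
    simp only [Finset.mem_filter] at *
    exact ⟨hj.1, le_trans hj.2 hxy.le⟩
  rw [Finset.ssubset_iff_of_subset hsub]
  refine ⟨y, Finset.mem_filter.mpr ⟨hy, le_refl _⟩, ?_⟩
  simp only [Finset.mem_filter, not_and]
  intro _
  exact not_le.mpr hxy

lemma rk_id_le {K : ℕ} {S : Finset (Fin K)} {x y : Fin K} (hy : y ∈ S) (hxy : x < y) :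
    rk S 1 x ≤ S.card - 1 := by
  have h1 : rk S 1 y ≤ S.card := Finset.card_le_card (Finset.filter_subset _ _)
  have := rk_id_lt hy hxy
  omega

/-- dS of the swap when not both endpoints are in S. -/
lemma dS_swap_zero {K m : ℕ} {p : ℝ} (hp0 : 0 < p) (hp1 : p < 1) (hm : m + 1 < K)
    {S : Finset (Fin K)} (hS : S.Nonempty)
    (hab : (⟨m, Nat.lt_of_succ_lt hm⟩ : Fin K) ∉ S ∨ (⟨m + 1, hm⟩ : Fin K) ∉ S) :
    dS p S (Equiv.swap (⟨m, Nat.lt_of_succ_lt hm⟩ : Fin K) ⟨m + 1, hm⟩) = 0 := by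
  unfold dS
  apply Finset.sum_eq_zero
  intro i hi
  have hfil : (S.filter fun j =>
        Equiv.swap (⟨m, Nat.lt_of_succ_lt hm⟩ : Fin K) ⟨m + 1, hm⟩ j ≤
        Equiv.swap (⟨m, Nat.lt_of_succ_lt hm⟩ : Fin K) ⟨m + 1, hm⟩ i) =
      (S.filter fun j => (1 : Equiv.Perm (Fin K)) j ≤ (1 : Equiv.Perm (Fin K)) i) := by
    apply Finset.filter_congr
    intro j hj
    simp only [Equiv.Perm.one_apply]
    exact swap_le_iff_not_mem hm hab hi hj
  have hoa : oa p (Equiv.swap (⟨m, Nat.lt_of_succ_lt hm⟩ : Fin K) ⟨m + 1, hm⟩) S i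
      = oa p 1 S i := by
    unfold oa
    rw [hfil]
  rw [hoa, div_self (oa_pos hp0 hp1 hS 1 i).ne', Real.log_one, mul_zero]

/-- dS of the swap when both endpoints are in S. -/
lemma dS_swap_eq {K m : ℕ} {p : ℝ} (hp0 : 0 < p) (hp1 : p < 1) (hm : m + 1 < K)
    {S : Finset (Fin K)}
    (ha : (⟨m, Nat.lt_of_succ_lt hm⟩ : Fin K) ∈ S) (hb : (⟨m + 1, hm⟩ : Fin K) ∈ S) :
    dS p S (Equiv.swap (⟨m, Nat.lt_of_succ_lt hm⟩ : Fin K) ⟨m + 1, hm⟩)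
      = Real.log (1 / p) * (1 - p) ^ 2 *
          p ^ (rk S 1 ⟨m, Nat.lt_of_succ_lt hm⟩ - 1) / (1 - p ^ S.card) := by
  set a : Fin K := ⟨m, Nat.lt_of_succ_lt hm⟩ with hadef
  set b : Fin K := ⟨m + 1, hm⟩ with hbdef
  set σ := Equiv.swap a b with hσdef
  have hne : S.Nonempty := ⟨a, ha⟩
  have hab : a ≠ b := by rw [hadef, hbdef]; simp [Fin.ext_iff]
  have hD : (0:ℝ) < 1 - p ^ S.card := by
    have := pow_lt_one₀ hp0.le hp1 (Finset.card_ne_zero.mpr hne); linarith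
  set R := rk S 1 a with hRdef
  have hR1 : 1 ≤ R := rk_pos ha
  have hRsucc : R - 1 + 1 = R := by omega
  set X := (1 - p) * p ^ (R - 1) / (1 - p ^ S.card) with hXdef
  have hXpos : 0 < X := by
    have := pow_pos hp0 (R - 1)
    have h4 : (0:ℝ) < 1 - p := by linarith
    exact div_pos (mul_pos h4 this) hD
  -- values of oa at a and b
  have h1a : oa p 1 S a = X := by rw [oa_eq_rk]
  have hpowR : p ^ R = p ^ (R - 1) * p := by rw [← pow_succ, hRsucc]
  have h1b : oa p 1 S b = X * p := by
    rw [oa_eq_rk, rk_id_succ hm hb]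
    simp only [Nat.add_sub_cancel, ← hRdef]
    rw [hpowR, hXdef]; ring
  have hσa : oa p σ S a = X * p := by
    rw [oa_eq_rk, hσdef, rk_swap_at_a hm, rk_id_succ hm hb]
    simp only [Nat.add_sub_cancel, ← hRdef]
    rw [hpowR, hXdef]; ring
  have hσb : oa p σ S b = X := by
    rw [oa_eq_rk, hσdef, rk_swap_at_b hm ha hb]
  -- dS is the sum over {a, b}
  have hzero : ∀ i ∈ S, i ∉ ({a, b} : Finset (Fin K)) →
      oa p 1 S i * Real.log (oa p 1 S i / oa p σ S i) = 0 := by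
    intro i hi hnot
    simp only [Finset.mem_insert, Finset.mem_singleton, not_or] at hnot
    have hia : i.1 ≠ m := fun h => hnot.1 (Fin.ext h)
    have hib : i.1 ≠ m + 1 := fun h => hnot.2 (Fin.ext h)
    have hfil : (S.filter fun j => σ j ≤ σ i) =
        (S.filter fun j => (1 : Equiv.Perm (Fin K)) j ≤ (1 : Equiv.Perm (Fin K)) i) := by
      apply Finset.filter_congr
      intro j hj
      simp only [Equiv.Perm.one_apply, hσdef]
      exact swap_le_iff_other hm hia hib j
    have hoa : oa p σ S i = oa p 1 S i := by unfold oa; rw [hfil]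
    rw [hoa, div_self (oa_pos hp0 hp1 hne 1 i).ne', Real.log_one, mul_zero]
  have hsub : ({a, b} : Finset (Fin K)) ⊆ S := by
    intro x hx
    simp only [Finset.mem_insert, Finset.mem_singleton] at hx
    rcases hx with h | h <;> subst h <;> assumption
  have hsum : dS p S σ = ∑ i ∈ ({a, b} : Finset (Fin K)),
      oa p 1 S i * Real.log (oa p 1 S i / oa p σ S i) :=
    (Finset.sum_subset hsub hzero).symm
  rw [hsum, Finset.sum_pair hab, h1a, h1b, hσa, hσb]
  have hXa : X / (X * p) = 1 / p := by
    rw [div_mul_eq_div_div, div_self hXpos.ne']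
  have hXb : X * p / X = p := by
    rw [mul_comm, mul_div_assoc, div_self hXpos.ne', mul_one]
  rw [hXa, hXb]
  have hlog : Real.log p = - Real.log (1 / p) := by
    rw [one_div, Real.log_inv, neg_neg]
  rw [hlog, hXdef]
  ring

lemma rk_penult {K : ℕ} (h : K - 2 + 1 < K) {S : Finset (Fin K)}
    (hb : (⟨K - 2 + 1, h⟩ : Fin K) ∈ S) :
    rk S 1 ⟨K - 2, Nat.lt_of_succ_lt h⟩ = S.card - 1 := by
  rw [rk_one]
  have hset : (S.filter fun j => j ≤ (⟨K - 2, Nat.lt_of_succ_lt h⟩ : Fin K))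
      = S.erase ⟨K - 2 + 1, h⟩ := by
    ext x
    simp only [Finset.mem_filter, Finset.mem_erase, Fin.le_def, ne_eq, Fin.ext_iff]
    have hx := x.isLt
    constructor
    · rintro ⟨hxS, hxle⟩
      exact ⟨by omega, hxS⟩
    · rintro ⟨hxne, hxS⟩
      exact ⟨hxS, by omega⟩
  rw [hset, Finset.card_erase_of_mem hb]

end StmtAux

open StmtAux in
theorem stmt8 (p : ℝ) (hp0 : 0 < p) (hp1 : p < 1) (K : ℕ) (hK : 2 ≤ K) :
    (∑ m ∈ Finset.range (K - 1),
        (if m = K - 2 then (1 + p) / ((K : ℝ) - 1 + p)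
         else 1 / ((K : ℝ) - 1 + p))) = 1
    ∧ ∀ S : Finset (Fin K), 2 ≤ S.card →
        (∑ m ∈ Finset.range (K - 1),
            (if m = K - 2 then (1 + p) / ((K : ℝ) - 1 + p)
             else 1 / ((K : ℝ) - 1 + p)) * dS p S (adjSwap K m))
          ≤ Real.log (1 / p) * (1 - p) / ((K : ℝ) - 1 + p) := by
  classical
  have hKR : (2:ℝ) ≤ (K:ℝ) := by exact_mod_cast hK
  have hKp : (0:ℝ) < (K:ℝ) - 1 + p := by linarith
  have hmem : K - 2 ∈ Finset.range (K - 1) := Finset.mem_range.mpr (by omega)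
  constructor
  · have hcongr : ∀ m ∈ Finset.range (K - 1),
        (if m = K - 2 then (1 + p) / ((K : ℝ) - 1 + p) else 1 / ((K : ℝ) - 1 + p))
          = 1 / ((K:ℝ) - 1 + p) + (if m = K - 2 then p / ((K:ℝ) - 1 + p) else 0) := by
      intro m _
      split_ifs with h
      · rw [← add_div]
      · rw [add_zero]
    rw [Finset.sum_congr rfl hcongr, Finset.sum_add_distrib, Finset.sum_const,
        Finset.sum_ite_eq' (Finset.range (K - 1)) (K - 2), if_pos hmem, Finset.card_range,
        nsmul_eq_mul]
    have hcast : ((K - 1 : ℕ) : ℝ) = (K:ℝ) - 1 := by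
      have h1 : 1 ≤ K := by omega
      push_cast [h1]
      ring
    rw [hcast]
    field_simp
  · intro S hS2
    set n := S.card with hndef
    have hn2 : 2 ≤ n := hS2
    have hSne : S.Nonempty := Finset.card_pos.mp (by omega)
    have hD : (0:ℝ) < 1 - p ^ n := by
      have := pow_lt_one₀ hp0.le hp1 (by omega : n ≠ 0)
      linarith
    set L := Real.log (1 / p) with hLdef
    have hL : 0 ≤ L := Real.log_nonneg (one_le_one_div hp0 hp1.le)
    set C := L * (1 - p) ^ 2 / (1 - p ^ n) with hCdef
    have hC : 0 ≤ C := div_nonneg (mul_nonneg hL (sq_nonneg _)) hD.le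
    have hadj : ∀ (m : ℕ) (h : m + 1 < K), adjSwap K m
        = Equiv.swap (⟨m, Nat.lt_of_succ_lt h⟩ : Fin K) ⟨m + 1, h⟩ := fun m h => dif_pos h
    have hezero : ∀ (m : ℕ) (h : m + 1 < K),
        ((⟨m, Nat.lt_of_succ_lt h⟩ : Fin K) ∉ S ∨ (⟨m + 1, h⟩ : Fin K) ∉ S) →
        dS p S (adjSwap K m) = 0 := by
      intro m h hab
      rw [hadj m h]
      exact dS_swap_zero hp0 hp1 h hSne hab
    have heeq : ∀ (m : ℕ) (h : m + 1 < K),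
        (⟨m, Nat.lt_of_succ_lt h⟩ : Fin K) ∈ S → (⟨m + 1, h⟩ : Fin K) ∈ S →
        dS p S (adjSwap K m) = C * p ^ (rk S 1 ⟨m, Nat.lt_of_succ_lt h⟩ - 1) := by
      intro m h ha hb
      rw [hadj m h, dS_swap_eq hp0 hp1 h ha hb, hCdef, ← hndef]
      ring
    -- total sum bound
    have hsum1 : ∑ m ∈ Finset.range (K - 1), dS p S (adjSwap K m)
        ≤ C * ((1 - p ^ (n - 1)) / (1 - p)) := by
      set T := (Finset.range (K - 1)).filter
        (fun m => if h : m + 1 < K then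
          (⟨m, Nat.lt_of_succ_lt h⟩ : Fin K) ∈ S ∧ (⟨m + 1, h⟩ : Fin K) ∈ S else False)
        with hTdef
      have hTmem : ∀ m ∈ T, ∃ h : m + 1 < K,
          (⟨m, Nat.lt_of_succ_lt h⟩ : Fin K) ∈ S ∧ (⟨m + 1, h⟩ : Fin K) ∈ S := by
        intro m hmT
        rw [hTdef, Finset.mem_filter] at hmT
        have h : m + 1 < K := by have := Finset.mem_range.mp hmT.1; omega
        refine ⟨h, ?_⟩
        have h2 := hmT.2
        rw [dif_pos h] at h2
        exact h2
      have hTsum : ∑ m ∈ T, dS p S (adjSwap K m)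
          = ∑ m ∈ Finset.range (K - 1), dS p S (adjSwap K m) := by
        rw [hTdef]
        apply Finset.sum_filter_of_ne
        intro m hm' hne
        have h : m + 1 < K := by have := Finset.mem_range.mp hm'; omega
        rw [dif_pos h]
        by_contra hcon
        push_neg at hcon
        rcases Classical.em ((⟨m, Nat.lt_of_succ_lt h⟩ : Fin K) ∈ S) with ha | ha
        · exact hne (hezero m h (Or.inr (hcon ha)))
        · exact hne (hezero m h (Or.inl ha))
      set ρ : ℕ → ℕ := fun m => if h : m < K then rk S 1 ⟨m, h⟩ - 1 else 0 with hρdef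
      have hρval : ∀ (m : ℕ) (h : m < K), ρ m = rk S 1 ⟨m, h⟩ - 1 := by
        intro m h
        rw [hρdef]
        simp only [dif_pos h]
      have heρ : ∀ m ∈ T, dS p S (adjSwap K m) = C * p ^ ρ m := by
        intro m hmT
        obtain ⟨h, ha, hb⟩ := hTmem m hmT
        rw [heeq m h ha hb, hρval m (Nat.lt_of_succ_lt h)]
      rw [← hTsum, Finset.sum_congr rfl heρ, ← Finset.mul_sum]
      apply mul_le_mul_of_nonneg_left ?_ hC
      have hinj : ∀ x ∈ T, ∀ y ∈ T, ρ x = ρ y → x = y := by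
        intro x hx y hy hxy
        obtain ⟨h, ha, hb⟩ := hTmem x hx
        obtain ⟨h', ha', hb'⟩ := hTmem y hy
        by_contra hneq
        rcases Nat.lt_or_ge x y with hlt | hge
        · have hrk : rk S 1 ⟨x, Nat.lt_of_succ_lt h⟩ < rk S 1 ⟨y, Nat.lt_of_succ_lt h'⟩ :=
            rk_id_lt ha' (by simp only [Fin.lt_def]; omega)
          have h1 := rk_pos (σ := 1) ha
          rw [hρval x (Nat.lt_of_succ_lt h), hρval y (Nat.lt_of_succ_lt h')] at hxy
          omega
        · have hlt : y < x := by omega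
          have hrk : rk S 1 ⟨y, Nat.lt_of_succ_lt h'⟩ < rk S 1 ⟨x, Nat.lt_of_succ_lt h⟩ :=
            rk_id_lt ha (by simp only [Fin.lt_def]; omega)
          have h1 := rk_pos (σ := 1) ha'
          rw [hρval x (Nat.lt_of_succ_lt h), hρval y (Nat.lt_of_succ_lt h')] at hxy
          omega
      have himg : T.image ρ ⊆ Finset.range (n - 1) := by
        intro r hr
        rw [Finset.mem_image] at hr
        obtain ⟨m, hmT, rfl⟩ := hr
        obtain ⟨h, ha, hb⟩ := hTmem m hmT
        have hle : rk S 1 ⟨m, Nat.lt_of_succ_lt h⟩ ≤ S.card - 1 :=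
          rk_id_le hb (by simp only [Fin.lt_def]; omega)
        have h1 := rk_pos (σ := 1) ha
        rw [hρval m (Nat.lt_of_succ_lt h), Finset.mem_range]
        omega
      calc ∑ m ∈ T, p ^ ρ m = ∑ r ∈ T.image ρ, p ^ r := (Finset.sum_image hinj).symm
        _ ≤ ∑ r ∈ Finset.range (n - 1), p ^ r :=
            Finset.sum_le_sum_of_subset_of_nonneg himg (fun i _ _ => (pow_pos hp0 i).le)
        _ = (1 - p ^ (n - 1)) / (1 - p) := by
            rw [geom_sum_eq hp1.ne]
            have h1 : p - 1 ≠ 0 := by linarith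
            have h2 : (1:ℝ) - p ≠ 0 := by linarith
            field_simp
            ring
    -- bound at K - 2
    have h2K : K - 2 + 1 < K := by omega
    have hsum2 : dS p S (adjSwap K (K - 2)) ≤ C * p ^ (n - 2) := by
      rcases Classical.em ((⟨K - 2, Nat.lt_of_succ_lt h2K⟩ : Fin K) ∈ S
          ∧ (⟨K - 2 + 1, h2K⟩ : Fin K) ∈ S) with hcase | hcase
      · rw [heeq (K - 2) h2K hcase.1 hcase.2, rk_penult h2K hcase.2, ← hndef]
        have hnn : n - 1 - 1 = n - 2 := by omega
        rw [hnn]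
      · push_neg at hcase
        rcases Classical.em ((⟨K - 2, Nat.lt_of_succ_lt h2K⟩ : Fin K) ∈ S) with ha | ha
        · rw [hezero (K - 2) h2K (Or.inr (hcase ha))]
          exact mul_nonneg hC (pow_pos hp0 _).le
        · rw [hezero (K - 2) h2K (Or.inl ha)]
          exact mul_nonneg hC (pow_pos hp0 _).le
    -- final assembly
    have hsplit : ∀ m ∈ Finset.range (K - 1),
        (if m = K - 2 then (1 + p) / ((K : ℝ) - 1 + p) else 1 / ((K : ℝ) - 1 + p))
            * dS p S (adjSwap K m)
          = (1 / ((K:ℝ) - 1 + p)) * dS p S (adjSwap K m)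
            + (if m = K - 2 then (p / ((K:ℝ) - 1 + p)) * dS p S (adjSwap K (K - 2)) else 0) := by
      intro m _
      split_ifs with h
      · subst h; ring
      · ring
    rw [Finset.sum_congr rfl hsplit, Finset.sum_add_distrib, ← Finset.mul_sum,
        Finset.sum_ite_eq' (Finset.range (K - 1)) (K - 2), if_pos hmem]
    have step1 : (1 / ((K:ℝ) - 1 + p)) * (∑ m ∈ Finset.range (K - 1), dS p S (adjSwap K m))
        ≤ (1 / ((K:ℝ) - 1 + p)) * (C * ((1 - p ^ (n - 1)) / (1 - p))) :=
      mul_le_mul_of_nonneg_left hsum1 (by positivity)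
    have step2 : (p / ((K:ℝ) - 1 + p)) * dS p S (adjSwap K (K - 2))
        ≤ (p / ((K:ℝ) - 1 + p)) * (C * p ^ (n - 2)) :=
      mul_le_mul_of_nonneg_left hsum2 (by positivity)
    have hfin : (1 / ((K:ℝ) - 1 + p)) * (C * ((1 - p ^ (n - 1)) / (1 - p)))
        + (p / ((K:ℝ) - 1 + p)) * (C * p ^ (n - 2))
        = L * (1 - p) / ((K:ℝ) - 1 + p) := by
      have e1 : p ^ (n - 1) = p ^ (n - 2) * p := by
        rw [← pow_succ]
        congr 1
        omega
      have e2 : p ^ n = p ^ (n - 1) * p := by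
        rw [← pow_succ]
        congr 1
        omega
      have hDne : (1:ℝ) - p ^ (n - 2) * p * p ≠ 0 := by
        have hh := hD
        rw [e2, e1] at hh
        linarith
      have h1p : (1:ℝ) - p ≠ 0 := by linarith
      rw [hCdef, e2, e1]
      field_simp
      have hDne2 : (1:ℝ) - p ^ 2 * p ^ (n - 2) ≠ 0 := by convert hDne using 1; ring
      field_simp
      ring
    linarith [step1, step2]
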